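/- Let N ≥ 1 and let U ∈ ℂ^{N×N} be unitary with columns u_1, …, u_N satisfying u_1 = (1/√N)·𝟏 and u_k = conj(u_{N+2−k}) for k = 2, …, ⌊N/2⌋+1. Let a ∈ ℂ^N with a_1 = 1. Then H_a = U·diag(a)·U⁻¹ is a normal atomic filter if and only if a_k = e^{-iθ_k} for k = 1, …, N, where θ_1, …, θ_N are pairwise distinct numbers in [0, 2π) satisfying θ_1 = 0 and θ_{N+2−k} + θ_k = 2π for k = 2, …, ⌊N/2⌋+1. Moreover, such an H_a is additionally periodic (H_a^N = I) if and only if these conditions hold together with {θ_1, …, θ_N} = {2π(k−1)/N : k = 1, …, N}. -/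

import Mathlib

open Matrix
set_option maxHeartbeats 1000000

private lemma ofReal_mul_I_inj {x y : ℝ} (h : (x:ℂ) * Complex.I = (y:ℂ) * Complex.I) : x = y := by
  have := congrArg Complex.im h
  simpa using this

private lemma star_exp_neg_real_mul_I (t : ℝ) :
    star (Complex.exp (-(t:ℂ) * Complex.I)) = Complex.exp ((t:ℂ) * Complex.I) := by
  rw [Complex.star_def, ← Complex.exp_conj]
  congr 1
  simp [_root_.map_mul]

private lemma exp_neg_inj_Ico {x y : ℝ} (hx : x ∈ Set.Ico 0 (2*Real.pi))
    (hy : y ∈ Set.Ico 0 (2*Real.pi))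
    (h : Complex.exp (-(x:ℂ)*Complex.I) = Complex.exp (-(y:ℂ)*Complex.I)) : x = y := by
  rw [Complex.exp_eq_exp_iff_exists_int] at h
  obtain ⟨n, hn⟩ := h
  have h' : -x = -y + n * (2*Real.pi) := by
    apply ofReal_mul_I_inj
    push_cast
    linear_combination hn
  have hπ := Real.pi_pos
  have hn0 : n = 0 := by
    by_contra hne
    rcases lt_or_gt_of_ne hne with h1 | h1
    · have h2 : n ≤ -1 := by omega
      have : (n:ℝ) ≤ -1 := by exact_mod_cast h2
      nlinarith [hx.1, hx.2, hy.1, hy.2]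
    · have : (1:ℝ) ≤ n := by exact_mod_cast h1
      nlinarith [hx.1, hx.2, hy.1, hy.2]
  rw [hn0] at h'
  push_cast at h'
  linarith


/-- For `U` unitary with first column `(1/√N)·𝟏` and
`u_k = conj (u_{N+2-k})` for `k = 2, …, ⌊N/2⌋+1` (1-based; 0-based below), and `a` with
`a_1 = 1`: `H_a = U * diagonal a * U⁻¹` is a normal atomic filter iff
`a_k = e^{-iθ_k}` for pairwise distinct `θ_k ∈ [0, 2π)` with `θ_1 = 0` and
`θ_{N+2-k} + θ_k = 2π` for `k = 2, …, ⌊N/2⌋+1`. Moreover `H_a` is a normal atomic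
filter that is additionally periodic (`H_a ^ N = 1`) iff furthermore
`{θ_1, …, θ_N} = {2π(k-1)/N : k = 1, …, N}`. -/
theorem normal_atomic_filter_characterization (N : ℕ) (hN : 1 ≤ N)
    (U : Matrix (Fin N) (Fin N) ℂ) (hU : U ∈ Matrix.unitaryGroup (Fin N) ℂ)
    (hu1 : ∀ n, U n ⟨0, hN⟩ = (Real.sqrt N : ℂ)⁻¹)
    (hsymm : ∀ (k : Fin N) (hk1 : 1 ≤ (k : ℕ)) (hk2 : (k : ℕ) ≤ N / 2),
      ∀ n, U n k = star (U n ⟨N - (k : ℕ), by omega⟩))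
    (a : Fin N → ℂ) (ha1 : a ⟨0, hN⟩ = 1) :
    ((Function.Injective a ∧ (∀ k, ‖a k‖ = 1) ∧
        (∀ i j, ((U * Matrix.diagonal a * U⁻¹) i j).im = 0)) ↔
      (∃ θ : Fin N → ℝ, Function.Injective θ ∧
        (∀ k, θ k ∈ Set.Ico (0 : ℝ) (2 * Real.pi)) ∧
        θ ⟨0, hN⟩ = 0 ∧
        (∀ (k : Fin N) (hk1 : 1 ≤ (k : ℕ)) (hk2 : (k : ℕ) ≤ N / 2),
          θ ⟨N - (k : ℕ), by omega⟩ + θ k = 2 * Real.pi) ∧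
        (∀ k, a k = Complex.exp (-(θ k : ℂ) * Complex.I)))) ∧
    ((Function.Injective a ∧ (∀ k, ‖a k‖ = 1) ∧
        (∀ i j, ((U * Matrix.diagonal a * U⁻¹) i j).im = 0) ∧
        (U * Matrix.diagonal a * U⁻¹) ^ N = 1) ↔
      (∃ θ : Fin N → ℝ, Function.Injective θ ∧
        (∀ k, θ k ∈ Set.Ico (0 : ℝ) (2 * Real.pi)) ∧
        θ ⟨0, hN⟩ = 0 ∧
        (∀ (k : Fin N) (hk1 : 1 ≤ (k : ℕ)) (hk2 : (k : ℕ) ≤ N / 2),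
          θ ⟨N - (k : ℕ), by omega⟩ + θ k = 2 * Real.pi) ∧
        (∀ k, a k = Complex.exp (-(θ k : ℂ) * Complex.I)) ∧
        Set.range θ = Set.range (fun k : Fin N => 2 * Real.pi * (k : ℕ) / N))) := by
  classical
  have hNR : (0:ℝ) < N := by exact_mod_cast hN
  have hπ := Real.pi_pos
  have hUU : Uᴴ * U = 1 := by
    have := hU.1
    rwa [Matrix.star_eq_conjTranspose] at this
  have hUU' : U * Uᴴ = 1 := by
    have := hU.2
    rwa [Matrix.star_eq_conjTranspose] at this
  have hUinv : U⁻¹ = Uᴴ := Matrix.inv_eq_left_inv hUU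
  have hN0 : 0 < N := hN
  set f : Fin N → Fin N := fun k => ⟨(N - (k:ℕ)) % N, Nat.mod_lt _ hN0⟩ with hfdef
  have hfval : ∀ k : Fin N, 1 ≤ (k:ℕ) → ((f k : ℕ) = N - (k:ℕ)) := by
    intro k hk
    have : N - (k:ℕ) < N := by omega
    simp [hfdef, Nat.mod_eq_of_lt this]
  have hf0 : f ⟨0, hN⟩ = ⟨0, hN⟩ := by
    apply Fin.ext; simp [hfdef]
  have hff : Function.Involutive f := by
    intro k
    apply Fin.ext
    have hlt := k.isLt
    rcases Nat.eq_zero_or_pos (k:ℕ) with h | h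
    · simp [hfdef, h]
    · have h1 : (f k : ℕ) = N - (k:ℕ) := hfval k h
      have h2 : 1 ≤ (f k : ℕ) := by omega
      rw [hfval _ h2, h1]; omega
  have hfbij := hff.bijective
  have hconj : ∀ (n k : Fin N), star (U n k) = U n (f k) := by
    intro n k
    have hlt := k.isLt
    rcases Nat.eq_zero_or_pos (k:ℕ) with h0 | h0
    · have hk : k = ⟨0, hN⟩ := Fin.ext h0
      rw [hk, hf0, hu1 n, ← Complex.ofReal_inv]
      exact Complex.conj_ofReal _
    · rcases le_or_gt (k:ℕ) (N/2) with h1 | h1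
      · have hs := hsymm k h0 h1 n
        have hfk : f k = ⟨N - (k:ℕ), by omega⟩ := Fin.ext (by rw [hfval k h0])
        rw [hs, star_star, hfk]
      · obtain ⟨k', hk'⟩ : ∃ k' : Fin N, (k':ℕ) = N - (k:ℕ) := ⟨⟨N - (k:ℕ), by omega⟩, rfl⟩
        have hs := hsymm k' (by omega) (by omega) n
        have hkk : (⟨N - (k':ℕ), by omega⟩ : Fin N) = k := Fin.ext (by simp only [hk']; omega)
        rw [hkk] at hs
        have hfk : f k = k' := Fin.ext (by rw [hfval k h0, hk'])
        rw [hfk, ← hs]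
  have hHapply : ∀ i j, (U * Matrix.diagonal a * Uᴴ) i j = ∑ k, U i k * a k * star (U j k) := by
    intro i j
    rw [Matrix.mul_apply]
    simp only [Matrix.mul_diagonal, Matrix.conjTranspose_apply]
  have hA : Uᴴ * (U * Matrix.diagonal a * Uᴴ) * U = Matrix.diagonal a := by
    calc Uᴴ * (U * Matrix.diagonal a * Uᴴ) * U
        = (Uᴴ * U) * Matrix.diagonal a * (Uᴴ * U) := by noncomm_ring
    _ = Matrix.diagonal a := by rw [hUU, one_mul, mul_one]
  have hdiag : ∀ j, a j = ∑ m, (∑ n, star (U n j) * (U * Matrix.diagonal a * Uᴴ) n m) * U m j := by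
    intro j
    have h0 := congrFun (congrFun hA j) j
    rw [Matrix.diagonal_apply_eq] at h0
    rw [← h0, Matrix.mul_apply]
    simp only [Matrix.mul_apply, Matrix.conjTranspose_apply]
  have fwd_conj : (∀ i j, ((U * Matrix.diagonal a * Uᴴ) i j).im = 0) →
      ∀ j, star (a j) = a (f j) := by
    intro hre j
    have hre' : ∀ n m, star ((U * Matrix.diagonal a * Uᴴ) n m) = (U * Matrix.diagonal a * Uᴴ) n m := by
      intro n m
      rw [Complex.star_def]
      exact Complex.conj_eq_iff_im.mpr (hre n m)
    calc star (a j)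
        = star (∑ m, (∑ n, star (U n j) * (U * Matrix.diagonal a * Uᴴ) n m) * U m j) := by
          rw [← hdiag j]
    _ = ∑ m, (∑ n, star (star (U n j)) * star ((U * Matrix.diagonal a * Uᴴ) n m)) * star (U m j) := by
          rw [star_sum]
          refine Finset.sum_congr rfl fun m _ => ?_
          rw [star_mul']
          congr 1
          rw [star_sum]
          exact Finset.sum_congr rfl fun n _ => by rw [star_mul']
    _ = ∑ m, (∑ n, star (U n (f j)) * (U * Matrix.diagonal a * Uᴴ) n m) * U m (f j) := by
          refine Finset.sum_congr rfl fun m _ => ?_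
          rw [hconj m j]
          congr 1
          refine Finset.sum_congr rfl fun n _ => ?_
          rw [hre' n m, hconj n j]
    _ = a (f j) := (hdiag (f j)).symm
  have bwd_real : (∀ k, star (a k) = a (f k)) →
      ∀ i j, ((U * Matrix.diagonal a * Uᴴ) i j).im = 0 := by
    intro hac i j
    have key : star ((U * Matrix.diagonal a * Uᴴ) i j) = (U * Matrix.diagonal a * Uᴴ) i j := by
      rw [hHapply i j, star_sum]
      calc ∑ k, star (U i k * a k * star (U j k))
          = ∑ k, U i (f k) * a (f k) * star (U j (f k)) := by
            refine Finset.sum_congr rfl fun k _ => ?_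
            rw [star_mul', star_mul', star_star, hconj i k, hac k]
            have hjk : U j k = star (U j (f k)) := by rw [hconj j (f k), hff k]
            rw [hjk]
      _ = ∑ k, U i k * a k * star (U j k) :=
            Fintype.sum_bijective f hfbij _ _ (fun x => rfl)
    rw [Complex.star_def] at key
    exact Complex.conj_eq_iff_im.mp key
  have hiff1 : (Function.Injective a ∧ (∀ k, ‖a k‖ = 1) ∧
        (∀ i j, ((U * Matrix.diagonal a * Uᴴ) i j).im = 0)) ↔
      (∃ θ : Fin N → ℝ, Function.Injective θ ∧
        (∀ k, θ k ∈ Set.Ico (0 : ℝ) (2 * Real.pi)) ∧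
        θ ⟨0, hN⟩ = 0 ∧
        (∀ (k : Fin N) (hk1 : 1 ≤ (k : ℕ)) (hk2 : (k : ℕ) ≤ N / 2),
          θ ⟨N - (k : ℕ), by omega⟩ + θ k = 2 * Real.pi) ∧
        (∀ k, a k = Complex.exp (-(θ k : ℂ) * Complex.I))) := by
    constructor
    · rintro ⟨hinj, habs, hre⟩
      have haconj := fwd_conj hre
      set θ : Fin N → ℝ := fun k => toIcoMod Real.two_pi_pos 0 (-(a k).arg) with hθdef
      have hθmem : ∀ k, θ k ∈ Set.Ico (0:ℝ) (2*Real.pi) := by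
        intro k
        have := toIcoMod_mem_Ico Real.two_pi_pos 0 (-(a k).arg)
        simpa using this
      have hθa : ∀ k, a k = Complex.exp (-(θ k : ℂ) * Complex.I) := by
        intro k
        have habs' : (‖a k‖ : ℂ) = 1 := by exact_mod_cast habs k
        have harg : a k = Complex.exp (((a k).arg : ℂ) * Complex.I) := by
          conv_lhs => rw [← Complex.norm_mul_exp_arg_mul_I (a k)]
          rw [habs', one_mul]
        have h1 : θ k + toIcoDiv Real.two_pi_pos 0 (-(a k).arg) • (2*Real.pi) = -(a k).arg :=
          toIcoMod_add_toIcoDiv_zsmul _ _ _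
        have h2 : -(θ k) = (a k).arg + (toIcoDiv Real.two_pi_pos 0 (-(a k).arg)) * (2*Real.pi) := by
          rw [zsmul_eq_mul] at h1; linarith
        rw [harg, Complex.exp_eq_exp_iff_exists_int]
        refine ⟨-(toIcoDiv Real.two_pi_pos 0 (-(a k).arg)), ?_⟩
        have h3 := congrArg (fun r : ℝ => (r:ℂ)) h2
        push_cast at h3 ⊢
        linear_combination (-Complex.I) * h3
      have hθinj : Function.Injective θ := fun j k h => hinj (by rw [hθa j, hθa k, h])
      have hθ0 : θ ⟨0, hN⟩ = 0 := by
        show toIcoMod Real.two_pi_pos 0 (-(a ⟨0, hN⟩).arg) = 0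
        rw [ha1, Complex.arg_one, neg_zero]
        exact (toIcoMod_eq_self _).mpr ⟨le_refl 0, by linarith⟩
      refine ⟨θ, hθinj, hθmem, hθ0, ?_, hθa⟩
      intro k hk1 hk2
      have hlt := k.isLt
      have hfk : (⟨N - (k:ℕ), by omega⟩ : Fin N) = f k := Fin.ext (by rw [hfval k hk1])
      rw [hfk]
      have hc := haconj k
      rw [hθa k, hθa (f k), star_exp_neg_real_mul_I, Complex.exp_eq_exp_iff_exists_int] at hc
      obtain ⟨n, hn⟩ := hc
      have h2 : θ k = -(θ (f k)) + n * (2*Real.pi) := by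
        apply ofReal_mul_I_inj
        push_cast
        linear_combination hn
      have hm1 := hθmem k
      have hm2 := hθmem (f k)
      have hn1 : n = 1 := by
        have hn01 : n = 0 ∨ n = 1 := by
          by_contra hcon
          have : n ≤ -1 ∨ 2 ≤ n := by omega
          rcases this with h | h
          · have : (n:ℝ) ≤ -1 := by exact_mod_cast h
            nlinarith [hm1.1, hm1.2, hm2.1, hm2.2]
          · have : (2:ℝ) ≤ n := by exact_mod_cast h
            nlinarith [hm1.1, hm1.2, hm2.1, hm2.2]
        rcases hn01 with h | h
        · exfalso
          rw [h] at h2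
          push_cast at h2
          have hz1 : θ k = 0 := by
            have := hm1.1; have := hm2.1; linarith
          have hk0 : k = ⟨0, hN⟩ := hθinj (by rw [hz1, hθ0])
          rw [hk0] at hk1
          simp at hk1
        · exact h
      rw [hn1] at h2
      push_cast at h2
      linarith
    · rintro ⟨θ, hθinj, hθmem, hθ0, hθsymm, hθa⟩
      have habs : ∀ k, ‖a k‖ = 1 := by
        intro k; rw [hθa k]
        simpa using Complex.norm_exp_ofReal_mul_I (-(θ k))
      have hinj : Function.Injective a := by
        intro j k h
        apply hθinj
        apply exp_neg_inj_Ico (hθmem j) (hθmem k)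
        rw [← hθa j, ← hθa k]; exact h
      have hsum : ∀ k : Fin N, 1 ≤ (k:ℕ) → θ (f k) + θ k = 2*Real.pi := by
        intro k hk1
        have hlt := k.isLt
        rcases le_or_gt (k:ℕ) (N/2) with h1 | h1
        · have h2 := hθsymm k hk1 h1
          have hfk : (⟨N - (k:ℕ), by omega⟩ : Fin N) = f k := Fin.ext (by rw [hfval k hk1])
          rwa [hfk] at h2
        · obtain ⟨k', hk'⟩ : ∃ k' : Fin N, (k':ℕ) = N - (k:ℕ) := ⟨⟨N - (k:ℕ), by omega⟩, rfl⟩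
          have h2 := hθsymm k' (by omega) (by omega)
          have e1 : (⟨N - (k':ℕ), by omega⟩ : Fin N) = k := Fin.ext (by simp only [hk']; omega)
          have e2 : k' = f k := Fin.ext (by rw [hfval k hk1, hk'])
          rw [e1, e2] at h2
          linarith
      have haconj : ∀ k, star (a k) = a (f k) := by
        intro k
        rcases Nat.eq_zero_or_pos (k:ℕ) with h0 | h0
        · have hk : k = ⟨0, hN⟩ := Fin.ext h0
          rw [hk, hf0, ha1]
          exact star_one _
        · rw [hθa k, hθa (f k), star_exp_neg_real_mul_I, Complex.exp_eq_exp_iff_exists_int]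
          refine ⟨1, ?_⟩
          have hs := hsum k h0
          have hr : θ k = -(θ (f k)) + 1 * (2*Real.pi) := by linarith
          have h3 := congrArg (fun r : ℝ => (r:ℂ)) hr
          push_cast at h3 ⊢
          linear_combination Complex.I * h3
      exact ⟨hinj, habs, bwd_real haconj⟩
  have hmulkey : ∀ X Y : Matrix (Fin N) (Fin N) ℂ, (U*X*Uᴴ) * (U*Y*Uᴴ) = U*(X*Y)*Uᴴ := by
    intro X Y
    calc (U*X*Uᴴ) * (U*Y*Uᴴ) = U*(X*((Uᴴ*U)*Y))*Uᴴ := by noncomm_ring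
    _ = U*(X*Y)*Uᴴ := by rw [hUU, one_mul]
  have hpow : ∀ m : ℕ, (U * Matrix.diagonal a * Uᴴ) ^ m = U * (Matrix.diagonal a) ^ m * Uᴴ := by
    intro m
    induction m with
    | zero => rw [pow_zero, pow_zero, Matrix.mul_one, hUU']
    | succ m ih => rw [pow_succ, ih, hmulkey, ← pow_succ]
  have hperiff : ((U * Matrix.diagonal a * Uᴴ) ^ N = 1) ↔ ∀ k, a k ^ N = 1 := by
    have hDpow : (Matrix.diagonal a) ^ N = Matrix.diagonal (fun k => a k ^ N) := by
      rw [Matrix.diagonal_pow]; rfl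
    rw [hpow N, hDpow]
    constructor
    · intro h k
      have h6 : Matrix.diagonal (fun k => a k ^ N) = 1 := by
        have h5 := congrArg (fun M => Uᴴ * M * U) h
        rw [show Uᴴ * (U * Matrix.diagonal (fun k => a k ^ N) * Uᴴ) * U
            = (Uᴴ*U) * Matrix.diagonal (fun k => a k ^ N) * (Uᴴ*U) from by noncomm_ring,
          hUU, one_mul, mul_one, Matrix.mul_one, hUU] at h5
        exact h5
      have h7 := congrFun (congrFun h6 k) k
      simpa [Matrix.diagonal_apply_eq, Matrix.one_apply_eq] using h7
    · intro h
      rw [show (fun k => a k ^ N) = fun _ => (1:ℂ) from funext h, Matrix.diagonal_one,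
        Matrix.mul_one, hUU']
  rw [hUinv]
  refine ⟨hiff1, ?_⟩
  constructor
  · rintro ⟨hinj, habs, hre, hper⟩
    obtain ⟨θ, hθinj, hθmem, hθ0, hθsymm, hθa⟩ := hiff1.mp ⟨hinj, habs, hre⟩
    have hroots := hperiff.mp hper
    have hex : ∀ k, ∃ m : Fin N, θ k = 2*Real.pi*((m:ℕ):ℝ)/N := by
      intro k
      have h1 : Complex.exp ((N:ℂ) * (-(θ k:ℂ) * Complex.I)) = 1 := by
        rw [Complex.exp_nat_mul, ← hθa k]
        exact hroots k
      rw [Complex.exp_eq_one_iff] at h1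
      obtain ⟨n, hn⟩ := h1
      have hr : (N:ℝ) * (-(θ k)) = n * (2*Real.pi) := by
        apply ofReal_mul_I_inj
        push_cast
        linear_combination hn
      have hmem := hθmem k
      have hn0 : 0 ≤ -n := by
        by_contra hc
        push_neg at hc
        have h4 : (1:ℤ) ≤ n := by omega
        have : (1:ℝ) ≤ n := by exact_mod_cast h4
        nlinarith [hmem.1]
      have he : ((-n).toNat : ℝ) = -(n:ℝ) := by
        exact_mod_cast congrArg (Int.cast : ℤ → ℝ) (Int.toNat_of_nonneg hn0)
      have hnN : (-n).toNat < N := by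
        by_contra hc
        push_neg at hc
        have : (N:ℝ) ≤ ((-n).toNat:ℝ) := by exact_mod_cast hc
        rw [he] at this
        nlinarith [hmem.2]
      refine ⟨⟨(-n).toNat, hnN⟩, ?_⟩
      show θ k = 2*Real.pi * (((-n).toNat : ℕ):ℝ) / N
      rw [he]
      field_simp
      linear_combination -hr
    choose τ hτ using hex
    have hτinj : Function.Injective τ := fun j k h => hθinj (by rw [hτ j, hτ k, h])
    have hτsurj : Function.Surjective τ := Finite.injective_iff_surjective.mp hτinj
    refine ⟨θ, hθinj, hθmem, hθ0, hθsymm, hθa, ?_⟩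
    ext x
    simp only [Set.mem_range]
    constructor
    · rintro ⟨k, rfl⟩
      exact ⟨τ k, (hτ k).symm⟩
    · rintro ⟨j, rfl⟩
      obtain ⟨k, rfl⟩ := hτsurj j
      exact ⟨k, hτ k⟩
  · rintro ⟨θ, hθinj, hθmem, hθ0, hθsymm, hθa, hrange⟩
    obtain ⟨hinj, habs, hre⟩ := hiff1.mpr ⟨θ, hθinj, hθmem, hθ0, hθsymm, hθa⟩
    refine ⟨hinj, habs, hre, ?_⟩
    apply hperiff.mpr
    intro k
    have hmem : θ k ∈ Set.range (fun k : Fin N => 2*Real.pi*((k:ℕ):ℝ)/N) := by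
      rw [← hrange]
      exact ⟨k, rfl⟩
    obtain ⟨j, hj⟩ := hmem
    have hj' : 2*Real.pi*((j:ℕ):ℝ)/N = θ k := hj
    have hNne : (N:ℝ) ≠ 0 := ne_of_gt hNR
    have hr : (N:ℝ) * θ k = 2*Real.pi*((j:ℕ):ℝ) := by
      rw [← hj']
      field_simp
    rw [hθa k, ← Complex.exp_nat_mul, Complex.exp_eq_one_iff]
    refine ⟨-((j:ℕ):ℤ), ?_⟩
    have hc := congrArg (fun r : ℝ => (r:ℂ)) hr
    push_cast at hc ⊢
    linear_combination (-Complex.I) * hc
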